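/- For all real numbers x and y, the conjunction of the following four conditions holds if and only if (0 < x and y = ln(x)): (i) if 1 < x then y = ln(max(x-1, 0) + 1); (ii) x = 1 if and only if y = 0; (iii) if 0 < x < 1 then there exist reals a, b with x = exp(a)/(exp(a)+1), x = tanh(b), and y = a - 2·b + ln(max(x, 0) + 1); (iv) 0 < x. -/

import Mathlib

open Real

lemma tanh_exp_formula (b : ℝ) :
    Real.tanh b = (Real.exp (2*b) - 1) / (Real.exp (2*b) + 1) := by
  rw [Real.tanh_eq_sinh_div_cosh, Real.sinh_eq, Real.cosh_eq]
  have h1 : Real.exp (2*b) = Real.exp b * Real.exp b := by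
    rw [two_mul, Real.exp_add]
  have h2 : Real.exp (-b) = (Real.exp b)⁻¹ := Real.exp_neg b
  have hb : Real.exp b ≠ 0 := (Real.exp_pos b).ne'
  have hb2 : Real.exp b * Real.exp b + 1 ≠ 0 := by positivity
  rw [h1, h2]
  field_simp

theorem psi_log_correct (x y : ℝ) :
    ((1 < x → y = Real.log (max (x - 1) 0 + 1)) ∧
     (x = 1 ↔ y = 0) ∧
     (0 < x ∧ x < 1 → ∃ a b : ℝ, x = Real.exp a / (Real.exp a + 1) ∧ x = Real.tanh b ∧
        y = a - 2 * b + Real.log (max x 0 + 1)) ∧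
     0 < x) ↔ (0 < x ∧ y = Real.log x) := by
  constructor
  · rintro ⟨h1, h2, h3, hx⟩
    refine ⟨hx, ?_⟩
    rcases lt_trichotomy x 1 with hlt | heq | hgt
    · obtain ⟨a, b, ha, hb, hy⟩ := h3 ⟨hx, hlt⟩
      have hx1 : (0:ℝ) < 1 - x := by linarith
      have hx1' : (1:ℝ) + x > 0 := by linarith
      -- solve for exp a
      have hea : Real.exp a = x / (1 - x) := by
        have hpos : Real.exp a + 1 > 0 := by positivity
        field_simp at ha ⊢
        nlinarith [ha]
      have haval : a = Real.log x - Real.log (1 - x) := by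
        have : a = Real.log (x / (1 - x)) := by
          rw [← hea, Real.log_exp]
        rw [this, Real.log_div hx.ne' hx1.ne']
      -- solve for exp (2b)
      have heb : Real.exp (2*b) = (1 + x) / (1 - x) := by
        have hb' := hb
        rw [tanh_exp_formula] at hb'
        have hpos : Real.exp (2*b) + 1 > 0 := by positivity
        field_simp at hb' ⊢
        nlinarith [hb']
      have hbval : 2*b = Real.log (1 + x) - Real.log (1 - x) := by
        have : 2*b = Real.log ((1 + x) / (1 - x)) := by
          rw [← heb, Real.log_exp]
        rw [this, Real.log_div hx1'.ne' hx1.ne']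
      have hmax : max x 0 = x := max_eq_left hx.le
      rw [hy, hmax, haval]
      have : x + 1 = 1 + x := by ring
      rw [this]
      linarith [hbval]
    · rw [h2.mp heq, heq, Real.log_one]
    · rw [h1 hgt]
      have : max (x - 1) 0 = x - 1 := max_eq_left (by linarith)
      rw [this]
      norm_num
  · rintro ⟨hx, hy⟩
    refine ⟨?_, ?_, ?_, hx⟩
    · intro hgt
      have : max (x - 1) 0 = x - 1 := max_eq_left (by linarith)
      rw [this, hy]
      norm_num
    · constructor
      · intro h; rw [hy, h, Real.log_one]
      · intro h
        rw [hy] at h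
        rcases Real.log_eq_zero.mp h with h0 | h1 | hm1
        · exact absurd h0 hx.ne'
        · exact h1
        · linarith
    · rintro ⟨hx0, hx1⟩
      have h1x : (0:ℝ) < 1 - x := by linarith
      have h1x' : (0:ℝ) < 1 + x := by linarith
      refine ⟨Real.log x - Real.log (1 - x),
        (Real.log (1 + x) - Real.log (1 - x)) / 2, ?_, ?_, ?_⟩
      · have hea : Real.exp (Real.log x - Real.log (1 - x)) = x / (1 - x) := by
          rw [Real.exp_sub, Real.exp_log hx0, Real.exp_log h1x]
        rw [hea]
        field_simp
        ring
      · have heb : Real.exp (2 * ((Real.log (1 + x) - Real.log (1 - x)) / 2))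
            = (1 + x) / (1 - x) := by
          rw [show 2 * ((Real.log (1 + x) - Real.log (1 - x)) / 2)
              = Real.log (1 + x) - Real.log (1 - x) by ring,
            Real.exp_sub, Real.exp_log h1x', Real.exp_log h1x]
        rw [tanh_exp_formula, heb]
        field_simp
        ring
      · have hmax : max x 0 = x := max_eq_left hx0.le
        rw [hmax, hy]
        have hlog : Real.log (x + 1) = Real.log (1 + x) := by ring_nf
        rw [hlog]
        ring
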